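/- For natural numbers D and K = 4, the inequality C(D,4) + D·C(D-1,2) + C(D,2) ≤ 6·C(D,3) + 3·D·(D-1) holds if and only if D ≤ 18 (for D ≥ 4). -/
import Mathlib


theorem stmt_7 (D : ℕ) (hD : 4 ≤ D) :
    (D.choose 4 + D * (D - 1).choose 2 + D.choose 2 ≤ 6 * D.choose 3 + 3 * D * (D - 1)) ↔
      D ≤ 18 := by
  obtain ⟨m, rfl⟩ : ∃ m, D = m + 4 := ⟨D - 4, by omega⟩
  have h4 : (m + 4).choose 4 * 24 = (m + 4) * (m + 3) * (m + 2) * (m + 1) := by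
    have := Nat.descFactorial_eq_factorial_mul_choose (m + 4) 4
    simp [Nat.descFactorial, Nat.factorial] at this
    linarith [this]
  have h3 : (m + 4).choose 3 * 6 = (m + 4) * (m + 3) * (m + 2) := by
    have := Nat.descFactorial_eq_factorial_mul_choose (m + 4) 3
    simp [Nat.descFactorial, Nat.factorial] at this
    linarith [this]
  have h2 : (m + 4).choose 2 * 2 = (m + 4) * (m + 3) := by
    have := Nat.descFactorial_eq_factorial_mul_choose (m + 4) 2
    simp [Nat.descFactorial, Nat.factorial] at this
    linarith [this]
  have h2' : (m + 3).choose 2 * 2 = (m + 3) * (m + 2) := by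
    have := Nat.descFactorial_eq_factorial_mul_choose (m + 3) 2
    simp [Nat.descFactorial, Nat.factorial] at this
    linarith [this]
  have hsub : m + 4 - 1 = m + 3 := by omega
  rw [hsub]
  constructor
  · intro h
    by_contra hc
    push_neg at hc
    obtain ⟨n, rfl⟩ : ∃ n, m = n + 15 := ⟨m - 15, by omega⟩
    have h' : ((n + 19).choose 4 + (n + 19) * (n + 18).choose 2 + (n + 19).choose 2) * 24 ≤
        (6 * (n + 19).choose 3 + 3 * (n + 19) * (n + 18)) * 24 := by
      exact Nat.mul_le_mul_right _ (by convert h using 3 <;> ring)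
    have e4 : (n + 19).choose 4 * 24 = (n + 19) * (n + 18) * (n + 17) * (n + 16) := by
      convert h4 using 2 <;> ring
    have e3 : (n + 19).choose 3 * 6 = (n + 19) * (n + 18) * (n + 17) := by
      convert h3 using 2 <;> ring
    have e2 : (n + 19).choose 2 * 2 = (n + 19) * (n + 18) := by
      convert h2 using 2 <;> ring
    have e2' : (n + 18).choose 2 * 2 = (n + 18) * (n + 17) := by
      convert h2' using 2 <;> ring
    nlinarith [h', e4, e3, e2, e2']
  · intro h
    have hm : m ≤ 14 := by omega
    have key : ((m + 4).choose 4 + (m + 4) * (m + 3).choose 2 + (m + 4).choose 2) * 24 ≤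
        (6 * (m + 4).choose 3 + 3 * (m + 4) * (m + 3)) * 24 := by
      nlinarith [h4, h3, h2, h2', hm, sq_nonneg m, Nat.mul_le_mul_right ((m+4)*(m+3)) hm]
    exact Nat.le_of_mul_le_mul_right key (by norm_num)
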